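/- Let A be an n×n real matrix. A is a P-matrix (all principal minors positive) if and only if A does not reverse the sign of any nonzero vector, i.e., for every nonzero x ∈ ℝⁿ there exists an index i with x_i · (Ax)_i > 0. -/

import Mathlib

open Matrix Finset

variable {m : Type*} [Fintype m] [DecidableEq m]

/-- General P-matrix predicate including the empty minor (which is `1`). -/
def PM (B : Matrix m m ℝ) : Prop :=
  ∀ t : Finset m, 0 < (B.submatrix (fun i : t => (i : m)) (fun j : t => (j : m))).det

lemma det_piecewise (B : Matrix m m ℝ) (d : m → ℝ) (s : Finset m) :
    Matrix.det (s.piecewise (Matrix.diagonal d) B)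
      = (∏ i ∈ s, d i) *
        (B.submatrix (fun i : (sᶜ : Finset m) => (i : m))
          (fun j : (sᶜ : Finset m) => (j : m))).det := by
  classical
  set N : Matrix m m ℝ := s.piecewise (fun i => Pi.single i 1) B with hN
  have hrow : (s.piecewise (Matrix.diagonal d) B)
      = fun i => (if i ∈ s then d i else 1) • N i := by
    funext i j
    by_cases hi : i ∈ s
    · simp only [Finset.piecewise, hi, if_true, hN, Matrix.diagonal_apply,
        Pi.smul_apply, Pi.single_apply, smul_eq_mul]
      by_cases h : i = j <;> simp [h, eq_comm]
    · simp [Finset.piecewise, hi, hN]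
  have hdet1 : Matrix.det (s.piecewise (Matrix.diagonal d) B)
      = (∏ i, if i ∈ s then d i else 1) * N.det := by
    rw [hrow]
    have := (Matrix.detRowAlternating : AlternatingMap ℝ (m → ℝ) ℝ m).toMultilinearMap.map_smul_univ
        (fun i => if i ∈ s then d i else 1) (fun i => N i)
    simpa [Matrix.det, smul_eq_mul] using this
  have hprod : (∏ i, if i ∈ s then d i else 1) = ∏ i ∈ s, d i := by
    rw [← Finset.prod_filter]
    congr 1
    simp [Finset.filter_mem_eq_inter]
  -- now compute det N
  have hNdet : N.det = (B.submatrix (fun i : (sᶜ : Finset m) => (i : m))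
      (fun j : (sᶜ : Finset m) => (j : m))).det := by
    let e : {a // a ∈ s} ⊕ {a // ¬ a ∈ s} ≃ m := Equiv.sumCompl (· ∈ s)
    have h1 : N.det = (N.submatrix e e).det := (Matrix.det_submatrix_equiv_self e N).symm
    have he1 : ∀ i : {a // a ∈ s}, e (Sum.inl i) = (i : m) := fun i => rfl
    have he2 : ∀ i : {a // ¬ a ∈ s}, e (Sum.inr i) = (i : m) := fun i => rfl
    have hblock : N.submatrix e e = Matrix.fromBlocks 1 0
        (B.submatrix (fun i : {a // ¬ a ∈ s} => (i : m)) (fun j : {a // a ∈ s} => (j : m)))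
        (B.submatrix (fun i : {a // ¬ a ∈ s} => (i : m)) (fun j : {a // ¬ a ∈ s} => (j : m))) := by
      ext i j
      cases i with
      | inl i =>
        cases j with
        | inl j =>
          rw [Matrix.submatrix_apply, he1, he1]
          rw [Matrix.fromBlocks_apply₁₁, Matrix.one_apply, hN]
          simp only [Finset.piecewise, i.2, if_true]
          rw [Pi.single_apply]
          exact if_congr ⟨fun h => Subtype.ext h.symm, fun h => congrArg Subtype.val h.symm⟩ rfl rfl
        | inr j =>
          have hne : (j : m) ≠ (i : m) := fun h => j.2 (h ▸ i.2)
          rw [Matrix.submatrix_apply, he1, he2]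
          simp [hN, Finset.piecewise, i.2, Pi.single_apply, hne]
      | inr i =>
        cases j with
        | inl j => rw [Matrix.submatrix_apply, he1, he2]; simp [hN, Finset.piecewise, he1, he2, i.2]
        | inr j => rw [Matrix.submatrix_apply, he2, he2]; simp [hN, Finset.piecewise, he1, he2, i.2]
    rw [h1, hblock, Matrix.det_fromBlocks_zero₁₂, Matrix.det_one, one_mul]
    rw [← Matrix.det_submatrix_equiv_self
      (Equiv.subtypeEquivRight (fun a => (Finset.mem_compl (s := s)).symm))
      (B.submatrix (fun i : (sᶜ : Finset m) => (i : m)) (fun j : (sᶜ : Finset m) => (j : m)))]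
    rfl
  rw [hdet1, hprod, hNdet]

lemma det_add_diagonal_pos (B : Matrix m m ℝ) (hB : PM B) (d : m → ℝ) (hd : ∀ i, 0 ≤ d i) :
    0 < (B + Matrix.diagonal d).det := by
  classical
  have hsum : (B + Matrix.diagonal d).det
      = ∑ s : Finset m, Matrix.det (s.piecewise (Matrix.diagonal d) B) := by
    have := (Matrix.detRowAlternating : AlternatingMap ℝ (m → ℝ) ℝ m).toMultilinearMap.map_add_univ
        (fun i => Matrix.diagonal d i) (fun i => B i)
    have h2 : (B + Matrix.diagonal d : Matrix m m ℝ)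
        = (fun i => Matrix.diagonal d i) + (fun i => B i) := by
      funext i j; simp [add_comm]
    rw [h2]
    simpa [Matrix.det] using this
  rw [hsum]
  apply Finset.sum_pos'
  · intro s _
    rw [det_piecewise]
    exact mul_nonneg (Finset.prod_nonneg fun i _ => hd i) (le_of_lt (hB _))
  · refine ⟨∅, Finset.mem_univ _, ?_⟩
    rw [det_piecewise]
    simpa using hB (∅ᶜ : Finset m)

lemma PM_submatrix (B : Matrix m m ℝ) (hB : PM B) (s : Finset m) :
    PM (B.submatrix (fun i : s => (i : m)) (fun j : s => (j : m))) := by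
  classical
  intro t
  set u : Finset m := t.image (fun a : s => (a : m)) with hu
  have h1 : ∀ j : m, j ∈ u → j ∈ s := by
    intro j hj
    rw [hu, Finset.mem_image] at hj
    obtain ⟨a, _, rfl⟩ := hj
    exact a.2
  have h2 : ∀ (j : m) (hj : j ∈ u), (⟨j, h1 j hj⟩ : s) ∈ t := by
    intro j hj
    have hj' := hj
    rw [hu, Finset.mem_image] at hj'
    obtain ⟨a, ha, rfl⟩ := hj'
    have : (⟨(a : m), h1 _ hj⟩ : s) = a := Subtype.ext rfl
    rw [this]
    exact ha
  have hmem : ∀ a : {a : s // a ∈ t}, ((a.1 : m)) ∈ u := by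
    intro a
    rw [hu, Finset.mem_image]
    exact ⟨a.1, a.2, rfl⟩
  let e : {a : s // a ∈ t} ≃ {j : m // j ∈ u} :=
    { toFun := fun a => ⟨(a.1 : m), hmem a⟩
      invFun := fun j => ⟨⟨j.1, h1 j.1 j.2⟩, h2 j.1 j.2⟩
      left_inv := fun a => by ext; rfl
      right_inv := fun j => rfl }
  have := hB u
  rw [← Matrix.det_submatrix_equiv_self e
    (B.submatrix (fun i : u => (i : m)) (fun j : u => (j : m)))] at this
  convert this using 2
  ext i j; rfl

lemma PM_signNonrev (B : Matrix m m ℝ) (hB : PM B) :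
    ∀ x : m → ℝ, x ≠ 0 → ∃ i, 0 < x i * B.mulVec x i := by
  classical
  intro x hx
  by_contra hcon
  push_neg at hcon
  set s : Finset m := Finset.univ.filter (fun i => x i ≠ 0) with hs
  have hxs : ∀ j, j ∉ s → x j = 0 := by
    intro j hj; by_contra h; exact hj (by simp [hs, h])
  set B' : Matrix s s ℝ := B.submatrix (fun i : s => (i : m)) (fun j : s => (j : m)) with hB'
  have hPM' : PM B' := PM_submatrix B hB s
  set d : s → ℝ := fun i => -(x i * B.mulVec x i) / (x i)^2 with hd
  have hxne : ∀ i : s, x i ≠ 0 := fun i => (Finset.mem_filter.mp i.2).2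
  have hdpos : ∀ i : s, 0 ≤ d i := by
    intro i
    apply div_nonneg (by linarith [hcon (i : m)]) (sq_nonneg _)
  set y : s → ℝ := fun i => x i with hy
  have hyne : y ≠ 0 := by
    obtain ⟨i, hi⟩ : ∃ i, x i ≠ 0 := Function.ne_iff.mp hx
    intro h
    exact hi (by simpa [hy] using congrFun h ⟨i, by simp [hs, hi]⟩)
  have hmv : (B' + Matrix.diagonal d).mulVec y = 0 := by
    funext i
    have hsum : B'.mulVec y i = B.mulVec x (i : m) := by
      show ∑ j : s, B' i j * y j = _
      have hc : ∀ j : s, B' i j * y j = B (i : m) (j : m) * x (j : m) := fun j => rfl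
      rw [Finset.sum_congr rfl (fun j _ => hc j),
        Finset.sum_coe_sort s (fun j => B (i : m) j * x j)]
      rw [Matrix.mulVec, dotProduct]
      exact Finset.sum_subset (Finset.subset_univ s)
        (fun j _ hj => by rw [hxs j hj, mul_zero])
    have hdiag : (Matrix.diagonal d).mulVec y i = d i * y i := by
      simp [Matrix.mulVec_diagonal]
    rw [Matrix.add_mulVec, Pi.add_apply, hsum, hdiag]
    have hne := hxne i
    show B.mulVec x (i : m) + (-(x (i:m) * B.mulVec x (i:m)) / (x (i:m))^2) * x (i:m) = 0
    field_simp
    ring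
  have hdet0 : (B' + Matrix.diagonal d).det = 0 :=
    (Matrix.exists_mulVec_eq_zero_iff).mp ⟨y, hyne, hmv⟩
  have := det_add_diagonal_pos B' hPM' d hdpos
  rw [hdet0] at this
  exact lt_irrefl 0 this

lemma det_pos_of_signNonrev (B : Matrix m m ℝ)
    (h : ∀ x : m → ℝ, x ≠ 0 → ∃ i, 0 < x i * B.mulVec x i) : 0 < B.det := by
  classical
  set g : ℝ → ℝ := fun t => ((1 - t) • (1 : Matrix m m ℝ) + t • B).det with hg
  have hcont : Continuous g := by
    apply Continuous.matrix_det
    apply Continuous.add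
    · exact (continuous_const.sub continuous_id).smul continuous_const
    · exact continuous_id.smul continuous_const
  have hne : ∀ t ∈ Set.Icc (0:ℝ) 1, g t ≠ 0 := by
    rintro t ⟨ht0, ht1⟩ hzero
    obtain ⟨v, hv, hmv⟩ := (Matrix.exists_mulVec_eq_zero_iff).mpr hzero
    obtain ⟨i, hi⟩ := h v hv
    have hvi : v i ≠ 0 := fun hv0 => by simp [hv0] at hi
    have hent : (1 - t) * v i + t * B.mulVec v i = 0 := by
      have := congrFun hmv i
      rw [Matrix.add_mulVec, Matrix.smul_mulVec, Matrix.smul_mulVec,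
        Matrix.one_mulVec] at this
      simpa using this
    have h2 : (1 - t) * (v i)^2 + t * (v i * B.mulVec v i) = 0 := by
      have h3 := congrArg (fun z => v i * z) hent
      simp only [mul_zero] at h3
      nlinarith [h3]
    have hsq : 0 < (v i)^2 := pow_pos (abs_pos.mpr hvi) 2 |>.trans_eq (by rw [sq_abs])
    rcases eq_or_lt_of_le ht0 with h0 | h0
    · rw [← h0] at h2; linarith
    · have := mul_pos h0 hi
      have := mul_nonneg (sub_nonneg.mpr ht1) hsq.le
      linarith
  have hg0 : g 0 = 1 := by simp [hg]
  have hg1 : g 1 = B.det := by simp [hg]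
  by_contra hle
  push_neg at hle
  have hlt : g 1 < 0 := lt_of_le_of_ne (hg1 ▸ hle) (hne 1 (by norm_num))
  have := intermediate_value_Icc' (by norm_num : (0:ℝ) ≤ 1) hcont.continuousOn
  have h0mem : (0:ℝ) ∈ Set.Icc (g 1) (g 0) := by
    constructor
    · exact le_of_lt hlt
    · rw [hg0]; norm_num
  obtain ⟨t, ht, hgt⟩ := this h0mem
  exact hne t ht hgt

lemma signNonrev_submatrix (B : Matrix m m ℝ)
    (h : ∀ x : m → ℝ, x ≠ 0 → ∃ i, 0 < x i * B.mulVec x i) (s : Finset m) :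
    ∀ y : s → ℝ, y ≠ 0 →
      ∃ i, 0 < y i * (B.submatrix (fun i : s => (i : m)) (fun j : s => (j : m))).mulVec y i := by
  classical
  intro y hy
  set x : m → ℝ := fun j => if hj : j ∈ s then y ⟨j, hj⟩ else 0 with hxdef
  have hx : x ≠ 0 := by
    obtain ⟨i, hi⟩ := Function.ne_iff.mp hy
    intro hx0
    apply hi
    have := congrFun hx0 (i : m)
    simpa [hxdef, i.2] using this
  obtain ⟨i, hi⟩ := h x hx
  have hxi : x i ≠ 0 := fun h0 => by simp [h0] at hi
  have his : i ∈ s := by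
    by_contra hns
    exact hxi (by simp [hxdef, hns])
  refine ⟨⟨i, his⟩, ?_⟩
  have hyx : y ⟨i, his⟩ = x i := by simp [hxdef, his]
  have hsum : (B.submatrix (fun i : s => (i : m)) (fun j : s => (j : m))).mulVec y ⟨i, his⟩
      = B.mulVec x i := by
    show ∑ j : s, B i (j : m) * y j = ∑ j : m, B i j * x j
    have hc : ∀ j : s, B i (j : m) * y j = B i (j : m) * x (j : m) := by
      intro j; rw [hxdef]; simp [j.2]
    rw [Finset.sum_congr rfl (fun j _ => hc j),
      Finset.sum_coe_sort s (fun j => B i j * x j)]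
    exact Finset.sum_subset (Finset.subset_univ s)
      (fun j _ hj => by rw [hxdef]; simp [hj])
  rw [hyx, hsum]
  exact hi

/-- A real square matrix is a P-matrix if all of its principal minors are positive. -/
def IsPMatrix {n : ℕ} (A : Matrix (Fin n) (Fin n) ℝ) : Prop :=
  ∀ s : Finset (Fin n), s.Nonempty →
    0 < (A.submatrix (fun i : s => (i : Fin n)) (fun j : s => (j : Fin n))).det

theorem stmt0 {n : ℕ} (A : Matrix (Fin n) (Fin n) ℝ) :
    IsPMatrix A ↔ ∀ x : Fin n → ℝ, x ≠ 0 → ∃ i, 0 < x i * A.mulVec x i := by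
  constructor
  · intro hA
    have hPM : PM A := by
      intro t
      rcases Finset.eq_empty_or_nonempty t with rfl | ht
      · haveI : IsEmpty ((∅ : Finset (Fin n)) : Type) :=
          ⟨fun i => Finset.notMem_empty i.1 i.2⟩
        rw [Matrix.det_isEmpty]
        norm_num
      · exact hA t ht
    exact PM_signNonrev A hPM
  · intro h s _
    exact det_pos_of_signNonrev _ (signNonrev_submatrix A h s)
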